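/- Let n ≥ 1, let q be a polynomial with complex coefficients, let α = q(0), and let A, X be n×n complex matrices such that q(XA − AX) = X. Then the matrix C := XA − AX is nilpotent, X − α·I_n is nilpotent, and Σ_{k=1}^{n−1} (coefficient of x^k in q) · C^k = X − α·I_n. -/

import Mathlib

open Module LinearMap

lemma vand_zero {m : ℕ} (μ : Fin m → ℂ) (hinj : Function.Injective μ) (v : Fin m → ℂ)
    (h : ∀ j : Fin m, ∑ i, μ i ^ (j : ℕ) * v i = 0) : v = 0 := by
  have hdet : (Matrix.vandermonde μ).transpose.det ≠ 0 := by
    rw [Matrix.det_transpose, Matrix.det_vandermonde_ne_zero_iff]; exact hinj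
  apply Matrix.eq_zero_of_mulVec_eq_zero hdet
  ext j
  simpa [Matrix.mulVec, Matrix.vandermonde, dotProduct] using h j

lemma end_isNilpotent_of_trace_pow {V : Type*} [AddCommGroup V] [Module ℂ V]
    [FiniteDimensional ℂ V]
    (f : Module.End ℂ V) (h : ∀ k : ℕ, 1 ≤ k → trace ℂ V (f ^ k) = 0) : IsNilpotent f := by
  classical
  have htop : ⨆ μ : ℂ, f.maxGenEigenspace μ = ⊤ := f.iSup_maxGenEigenspace_eq_top
  have hfin : {μ : ℂ | f.maxGenEigenspace μ ≠ ⊥}.Finite :=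
    WellFoundedGT.finite_ne_bot_of_iSupIndep f.independent_maxGenEigenspace
  have hds := DirectSum.isInternal_submodule_of_iSupIndep_of_iSup_eq_top
      f.independent_maxGenEigenspace htop
  have hmaps : ∀ μ : ℂ, Set.MapsTo f (f.maxGenEigenspace μ) (f.maxGenEigenspace μ) :=
    fun μ ↦ f.mapsTo_maxGenEigenspace_of_comm rfl μ
  have hmapsk : ∀ (k : ℕ) (μ : ℂ),
      Set.MapsTo (f ^ k) (f.maxGenEigenspace μ) (f.maxGenEigenspace μ) :=
    fun k μ ↦ f.mapsTo_maxGenEigenspace_of_comm (Commute.pow_right rfl k) μ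
  set d : ℂ → ℂ := fun μ ↦ (finrank ℂ (f.maxGenEigenspace μ) : ℂ) with hd
  have key : ∀ (μ : ℂ) (k : ℕ),
      trace ℂ _ ((f ^ k).restrict (hmapsk k μ)) = μ ^ k * d μ := by
    intro μ k
    have hrw : ∀ k : ℕ, (f ^ k).restrict (hmapsk k μ) = (f.restrict (hmaps μ)) ^ k := by
      intro k
      exact (Module.End.pow_restrict k (hmaps μ) (hmapsk k μ)).symm
    rw [hrw]
    induction k with
    | zero => simp [hd]
    | succ k ih =>
      have hnil : IsNilpotent (f.restrict (hmaps μ) - algebraMap ℂ _ μ) := by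
        have heq : f.restrict (hmaps μ) - algebraMap ℂ _ μ
            = (f - algebraMap ℂ (Module.End ℂ V) μ).restrict
              (f.mapsTo_maxGenEigenspace_of_comm (Algebra.mul_sub_algebraMap_commutes f μ) μ) := by
          ext x
          simp [LinearMap.restrict_apply, Module.algebraMap_end_apply]
          rfl
        rw [heq]
        exact f.isNilpotent_restrict_maxGenEigenspace_sub_algebraMap μ
      rw [pow_succ, Module.End.mul_eq_comp,
        trace_comp_eq_mul_of_commute_of_isNilpotent μ ((Commute.refl _).pow_left k) hnil, ih]
      ring
  have hsum : ∀ k : ℕ, 1 ≤ k → ∑ μ ∈ hfin.toFinset, μ ^ k * d μ = 0 := by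
    intro k hk
    rw [← h k hk, trace_eq_sum_trace_restrict' hds hfin (hmapsk k)]
    exact (Finset.sum_congr rfl fun μ _ ↦ (key μ k).symm)
  -- all nonzero eigenvalues lead to contradiction
  have hzero : ∀ μ : ℂ, μ ≠ 0 → f.maxGenEigenspace μ = ⊥ := by
    intro μ0 hμ0
    by_contra hne
    set T : Finset ℂ := hfin.toFinset.filter (fun μ ↦ μ ≠ 0) with hT
    have hμ0T : μ0 ∈ T := by simp [hT, hne, hμ0]
    set m := T.card with hm
    have e : Fin m ≃ {x // x ∈ T} := T.equivFin.symm
    set w : Fin m → ℂ := fun i ↦ (e i : ℂ) with hw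
    have hwinj : Function.Injective w := fun i j hij ↦
      e.injective (Subtype.ext hij)
    set v : Fin m → ℂ := fun i ↦ w i * d (w i) with hv
    have hsum' : ∀ j : Fin m, ∑ i, w i ^ (j : ℕ) * v i = 0 := by
      intro j
      have h1 := hsum ((j : ℕ) + 1) (by omega)
      have h2 : ∑ μ ∈ T, μ ^ ((j : ℕ) + 1) * d μ = 0 := by
        rw [← h1]
        apply Finset.sum_filter_of_ne
        intro x hx hfx hx0
        exact hfx (by simp [hx0])
      calc ∑ i, w i ^ (j : ℕ) * v i = ∑ i, w i ^ ((j : ℕ) + 1) * d (w i) := by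
            apply Finset.sum_congr rfl; intro i _; simp [hv, pow_succ]; ring
        _ = ∑ x : {x // x ∈ T}, (x : ℂ) ^ ((j : ℕ) + 1) * d x :=
            Fintype.sum_bijective e e.bijective _ _ (fun i ↦ rfl)
        _ = ∑ μ ∈ T, μ ^ ((j : ℕ) + 1) * d μ :=
            Finset.sum_coe_sort T (fun μ : ℂ ↦ μ ^ ((j : ℕ) + 1) * d μ)
        _ = 0 := h2
    have hv0 := vand_zero w hwinj v hsum'
    -- contradiction: coordinate corresponding to μ0
    set i0 : Fin m := e.symm ⟨μ0, hμ0T⟩ with hi0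
    have hwi0 : w i0 = μ0 := by simp [hw, hi0]
    have h0 : μ0 * d μ0 = 0 := by
      have := congrFun hv0 i0
      simpa [hv, hwi0] using this
    have hd0 : d μ0 ≠ 0 := by
      have : finrank ℂ (f.maxGenEigenspace μ0) ≠ 0 := by
        have : Nontrivial (f.maxGenEigenspace μ0) := Submodule.nontrivial_iff_ne_bot.mpr hne
        exact (finrank_pos).ne'
      exact_mod_cast Nat.cast_ne_zero.mpr this
    rcases mul_eq_zero.mp h0 with h | h
    · exact hμ0 h
    · exact hd0 h
  -- hence the 0 generalized eigenspace is everything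
  have htop0 : f.maxGenEigenspace 0 = ⊤ := by
    rw [← htop]
    apply le_antisymm (le_iSup _ 0)
    apply iSup_le
    intro μ
    rcases eq_or_ne μ 0 with rfl | hμ
    · exact le_rfl
    · rw [hzero μ hμ]; exact bot_le
  have hpt : ∀ x : V, ∃ k : ℕ, (f ^ k) x = 0 := by
    intro x
    have hx : x ∈ f.maxGenEigenspace 0 := htop0 ▸ Submodule.mem_top
    rw [Module.End.mem_maxGenEigenspace] at hx
    obtain ⟨k, hk⟩ := hx
    exact ⟨k, by simpa using hk⟩
  exact ((LinearMap.charpoly_nilpotent_tfae f).out 0 2).mpr hpt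

lemma matrix_trace_toLin' {n : ℕ} (M : Matrix (Fin n) (Fin n) ℂ) :
    LinearMap.trace ℂ (Fin n → ℂ) (Matrix.toLin' M) = M.trace := by
  rw [trace_eq_matrix_trace ℂ (Pi.basisFun ℂ (Fin n)), LinearMap.toMatrix_eq_toMatrix',
    LinearMap.toMatrix'_toLin']

lemma matrix_isNilpotent_of_trace_pow {n : ℕ} (C : Matrix (Fin n) (Fin n) ℂ)
    (h : ∀ k : ℕ, 1 ≤ k → (C ^ k).trace = 0) : IsNilpotent C := by
  have h1 : IsNilpotent (Matrix.toLinAlgEquiv' C) := by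
    apply end_isNilpotent_of_trace_pow
    intro k hk
    rw [← map_pow]
    have : (Matrix.toLinAlgEquiv' (C ^ k) : (Fin n → ℂ) →ₗ[ℂ] (Fin n → ℂ))
        = Matrix.toLin' (C ^ k) := rfl
    rw [this, matrix_trace_toLin']
    exact h k hk
  have := h1.map (Matrix.toLinAlgEquiv' (R := ℂ) (n := Fin n)).symm
  simpa using this

theorem stmt15 (n : ℕ) (hn : 1 ≤ n) (q : Polynomial ℂ)
    (A X : Matrix (Fin n) (Fin n) ℂ)
    (h : Polynomial.aeval (X * A - A * X) q = X) :
    IsNilpotent (X * A - A * X) ∧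
    IsNilpotent (X - Polynomial.eval 0 q • (1 : Matrix (Fin n) (Fin n) ℂ)) ∧
    ∑ k ∈ Finset.Icc 1 (n - 1), q.coeff k • (X * A - A * X) ^ k =
      X - Polynomial.eval 0 q • (1 : Matrix (Fin n) (Fin n) ℂ) := by
  set C := X * A - A * X with hC
  have hq : Polynomial.aeval C q = X := h
  have hcomm : Commute C X := by
    rw [← hq]
    simpa using (Commute.all (Polynomial.X) q).map (Polynomial.aeval C)
  have htr : ∀ k : ℕ, 1 ≤ k → (C ^ k).trace = 0 := by
    intro k hk
    obtain ⟨m, rfl⟩ : ∃ m, k = m + 1 := ⟨k - 1, by omega⟩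
    have hCX : C ^ m * X = X * C ^ m := (hcomm.pow_left m).eq
    have e1 : C ^ (m + 1) = C ^ m * X * A - C ^ m * A * X := by
      rw [pow_succ, hC, mul_sub, ← mul_assoc, ← mul_assoc]
    have e2 : (C ^ m * A * X).trace = (C ^ m * X * A).trace := by
      rw [Matrix.trace_mul_comm, ← mul_assoc, ← hCX]
    rw [e1, Matrix.trace_sub, e2, sub_self]
  have hCnil : IsNilpotent C := matrix_isNilpotent_of_trace_pow C htr
  have hCn : C ^ n = 0 := by
    have h1 : IsNilpotent (C.charpoly - Polynomial.X ^ (Fintype.card (Fin n))) :=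
      Matrix.isNilpotent_charpoly_sub_pow_of_isNilpotent hCnil
    have h2 : C.charpoly = Polynomial.X ^ (Fintype.card (Fin n)) :=
      sub_eq_zero.mp h1.eq_zero
    have h3 := Matrix.aeval_self_charpoly C
    rw [h2] at h3
    simpa using h3
  set N := max n (q.natDegree + 1) with hN
  have hNn : n ≤ N := le_max_left _ _
  have hN1 : 0 < N := lt_of_lt_of_le hn hNn
  have hXsum : X = ∑ k ∈ Finset.range N, q.coeff k • C ^ k := by
    rw [← hq, Polynomial.aeval_eq_sum_range'
      (lt_of_lt_of_le (Nat.lt_succ_self _) (le_max_right _ _))]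
  have hsplit : X = q.coeff 0 • (1 : Matrix (Fin n) (Fin n) ℂ)
      + ∑ k ∈ Finset.Ico 1 N, q.coeff k • C ^ k := by
    rw [hXsum, Finset.sum_range_eq_add_Ico _ hN1, pow_zero]
  have hIco : ∑ k ∈ Finset.Icc 1 (n - 1), q.coeff k • C ^ k
      = ∑ k ∈ Finset.Ico 1 N, q.coeff k • C ^ k := by
    have hIcc : Finset.Icc 1 (n - 1) = Finset.Ico 1 n := by
      rw [← Finset.Ico_add_one_right_eq_Icc]
      congr 1
      omega
    rw [hIcc]
    apply Finset.sum_subset (Finset.Ico_subset_Ico le_rfl hNn)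
    intro k hk hk'
    have hkn : n ≤ k := by
      simp only [Finset.mem_Ico] at hk hk'
      omega
    have hCk : C ^ k = 0 := by
      calc C ^ k = C ^ n * C ^ (k - n) := by rw [← pow_add]; congr 1; omega
        _ = 0 := by rw [hCn, zero_mul]
    simp [hCk]
  have hmain : X - Polynomial.eval 0 q • (1 : Matrix (Fin n) (Fin n) ℂ)
      = ∑ k ∈ Finset.Ico 1 N, q.coeff k • C ^ k := by
    rw [← Polynomial.coeff_zero_eq_eval_zero]
    nth_rewrite 1 [hsplit]
    rw [add_sub_cancel_left]
  refine ⟨hCnil, ?_, ?_⟩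
  · rw [hmain]
    apply Commute.isNilpotent_sum
    · intro k hk
      have hk1 : 1 ≤ k := (Finset.mem_Ico.mp hk).1
      have hCk : IsNilpotent (C ^ k) :=
        ⟨n, by rw [← pow_mul, mul_comm k n, pow_mul, hCn, zero_pow (by omega)]⟩
      exact hCk.smul _
    · intro i j _ _
      exact (((Commute.refl C).pow_pow i j).smul_left _).smul_right _
  · rw [hIco, hmain]
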